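/- arXiv:1310.0546 — 2 statements merged into one kernel-verified Lean document; each statement's English description precedes it below -/
import Mathlib

section
/- In the braid group B_{2n}, the elements t_1 = σ_n and t_i = σ_{n+i-1}·σ_{n-i+1} (for 2 ≤ i ≤ n) satisfy the type B braid relations: t_1t_2t_1t_2 = t_2t_1t_2t_1, t_it_{i+1}t_i = t_{i+1}t_it_{i+1} for 2 ≤ i ≤ n−1, and t_it_j = t_jt_i for |i−j| > 1. -/
/-- Braid relations on `m` generators `σ_1,…,σ_m` (generator `i : Fin m` is `σ_{i+1}`). -/
def braidRels (m : ℕ) : Set (FreeGroup (Fin m)) :=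
  {r | (∃ i j : Fin m, (i : ℕ) + 1 = (j : ℕ) ∧
      r = .of i * .of j * .of i * (.of j * .of i * .of j)⁻¹) ∨
    (∃ i j : Fin m, (i : ℕ) + 2 ≤ (j : ℕ) ∧
      r = .of i * .of j * (.of j * .of i)⁻¹)}

/-- The braid group on `m+1` strands, with `m` Artin generators. -/
abbrev BraidGroup (m : ℕ) := PresentedGroup (braidRels m)

/-- The Artin generator `σ_k` (`1 ≤ k ≤ m`) of the braid group. -/
noncomputable def σ {m : ℕ} (k : ℕ) : BraidGroup m :=
  if h : 1 ≤ k ∧ k ≤ m then PresentedGroup.of (⟨k - 1, by omega⟩ : Fin m) else 1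

/-- Type `B_n` Artin relations on generators `s_1,…,s_n` (generator `i : Fin n` is `s_{i+1}`). -/
def typeBRels (n : ℕ) : Set (FreeGroup (Fin n)) :=
  {r | (∃ i j : Fin n, (i : ℕ) = 0 ∧ (j : ℕ) = 1 ∧
      r = .of i * .of j * .of i * .of j * (.of j * .of i * .of j * .of i)⁻¹) ∨
    (∃ i j : Fin n, 1 ≤ (i : ℕ) ∧ (i : ℕ) + 1 = (j : ℕ) ∧
      r = .of i * .of j * .of i * (.of j * .of i * .of j)⁻¹) ∨
    (∃ i j : Fin n, (i : ℕ) + 2 ≤ (j : ℕ) ∧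
      r = .of i * .of j * (.of j * .of i)⁻¹)}

/-- The Artin group of type `B_n`. -/
abbrev ArtinB (n : ℕ) := PresentedGroup (typeBRels n)

/-- The standard generator `s_k` (`1 ≤ k ≤ n`) of `A(B_n)`. -/
noncomputable def s {n : ℕ} (k : ℕ) : ArtinB n :=
  if h : 1 ≤ k ∧ k ≤ n then PresentedGroup.of (⟨k - 1, by omega⟩ : Fin n) else 1

lemma rel_one {α : Type*} {rels : Set (FreeGroup α)} {r : FreeGroup α} (hr : r ∈ rels) :
    PresentedGroup.mk rels r = 1 := by
  have : r ∈ Subgroup.normalClosure rels := Subgroup.subset_normalClosure hr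
  exact (QuotientGroup.eq_one_iff r).mpr this

lemma braid_of {m : ℕ} {i j : Fin m} (h : (i : ℕ) + 1 = j) :
    (PresentedGroup.of i : PresentedGroup (braidRels m)) * .of j * .of i
      = .of j * .of i * .of j := by
  have := rel_one (rels := braidRels m)
    (r := .of i * .of j * .of i * (.of j * .of i * .of j)⁻¹) (Or.inl ⟨i, j, h, rfl⟩)
  simp only [map_mul, map_inv] at this
  have h2 := mul_eq_one_iff_eq_inv.mp this
  simpa [PresentedGroup.of] using h2.trans (inv_inv _)

lemma sigmaCommOf {m : ℕ} {i j : Fin m} (h : (i : ℕ) + 2 ≤ j) :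
    (PresentedGroup.of i : PresentedGroup (braidRels m)) * .of j
      = .of j * .of i := by
  have := rel_one (rels := braidRels m)
    (r := .of i * .of j * (.of j * .of i)⁻¹) (Or.inr ⟨i, j, h, rfl⟩)
  simp only [map_mul, map_inv] at this
  have h2 := mul_eq_one_iff_eq_inv.mp this
  simpa [PresentedGroup.of] using h2.trans (inv_inv _)

lemma sigma_braid {m k : ℕ} (hk : 1 ≤ k) (h : k + 1 ≤ m) :
    (σ k : BraidGroup m) * σ (k + 1) * σ k = σ (k + 1) * σ k * σ (k + 1) := by
  rw [σ, σ, dif_pos ⟨hk, by omega⟩, dif_pos ⟨by omega, h⟩]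
  exact braid_of (by simp only [Fin.val_mk]; omega)

lemma sigma_comm {m k l : ℕ} (hk : 1 ≤ k) (h : k + 2 ≤ l) (hl : l ≤ m) :
    (σ k : BraidGroup m) * σ l = σ l * σ k := by
  rw [σ, σ, dif_pos ⟨hk, by omega⟩, dif_pos ⟨by omega, hl⟩]
  exact sigmaCommOf (by simp only [Fin.val_mk]; omega)

private lemma ext3 {G : Type*} [Group G] {a b c d e f : G} (h : a * b * c = d * e * f)
    (x : G) : a * (b * (c * x)) = d * (e * (f * x)) := by
  rw [← mul_assoc, ← mul_assoc, h, mul_assoc, mul_assoc]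

private lemma ext2 {G : Type*} [Group G] {a b c d : G} (h : a * b = c * d)
    (x : G) : a * (b * x) = c * (d * x) := by
  rw [← mul_assoc, h, mul_assoc]

private lemma keyB {G : Type*} [Group G] (a b c : G)
    (hab : a * b * a = b * a * b) (hbc : b * c * b = c * b * c) (hac : a * c = c * a) :
    b * (c * a) * b * (c * a) = c * a * b * (c * a) * b := by
  simp only [mul_assoc]
  conv_lhs => rw [← hac, ext3 hab, ext3 hbc]
  conv_rhs => rw [show c * (a * b) = a * (c * b) from ext2 hac.symm b, ext3 hab,
    show b * (c * b) = c * (b * c) from by rw [← mul_assoc, hbc, mul_assoc], ext2 hac]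

private lemma key2 {G : Type*} [Group G] (a b x y : G)
    (hab : a * b * a = b * a * b) (hxyx : x * y * x = y * x * y)
    (hax : a * x = x * a) (hay : a * y = y * a)
    (hbx : b * x = x * b) (hby : b * y = y * b) :
    a * x * (b * y) * (a * x) = b * y * (a * x) * (b * y) := by
  simp only [mul_assoc]
  conv_lhs => rw [ext2 hbx.symm, ext2 hay.symm, ext2 hax.symm, ext3 hab,
    show x * (y * x) = y * (x * y) from by rw [← mul_assoc, hxyx, mul_assoc],
    ext2 hby, ext2 hay, ext2 hbx]

private lemma cms {m k l : ℕ} (hk : 1 ≤ k) (h : k + 2 ≤ l) (hl : l ≤ m) :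
    Commute (σ k : BraidGroup m) (σ l) := sigma_comm hk h hl


/-- In `B_{2n}`, the elements `t_1 = σ_n`, `t_i = σ_{n+i-1} σ_{n-i+1}` satisfy the type `B`
braid relations. -/
theorem stmt_1 (n : ℕ) (hn : 1 ≤ n) (t : ℕ → BraidGroup (2 * n))
    (ht1 : t 1 = σ n)
    (hti : ∀ i : ℕ, 2 ≤ i → i ≤ n → t i = σ (n + i - 1) * σ (n - i + 1)) :
    (2 ≤ n → t 1 * t 2 * t 1 * t 2 = t 2 * t 1 * t 2 * t 1) ∧
    (∀ i : ℕ, 2 ≤ i → i ≤ n - 1 →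
      t i * t (i + 1) * t i = t (i + 1) * t i * t (i + 1)) ∧
    (∀ i j : ℕ, 1 ≤ i → i ≤ n → 1 ≤ j → j ≤ n → i + 2 ≤ j →
      t i * t j = t j * t i) := by
  refine ⟨?_, ?_, ?_⟩
  · intro h2n
    rw [ht1, hti 2 le_rfl h2n, show n + 2 - 1 = n + 1 from by omega,
      show n - 2 + 1 = n - 1 from by omega]
    have hab : (σ (n-1) : BraidGroup (2*n)) * σ n * σ (n-1) = σ n * σ (n-1) * σ n := by
      have := sigma_braid (m := 2*n) (k := n-1) (by omega) (by omega)
      rwa [show n - 1 + 1 = n from by omega] at this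
    have hbc : (σ n : BraidGroup (2*n)) * σ (n+1) * σ n = σ (n+1) * σ n * σ (n+1) :=
      sigma_braid (by omega) (by omega)
    have hac : (σ (n-1) : BraidGroup (2*n)) * σ (n+1) = σ (n+1) * σ (n-1) := by
      have := sigma_comm (m := 2*n) (k := n-1) (l := n+1) (by omega) (by omega) (by omega)
      exact this
    exact keyB (σ (n-1)) (σ n) (σ (n+1)) hab hbc hac
  · intro i h2 hin1
    rw [hti i h2 (by omega), hti (i+1) (by omega) (by omega),
      show n + (i+1) - 1 = n + i from by omega, show n - (i+1) + 1 = n - i from by omega]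
    have hab : (σ (n+i-1) : BraidGroup (2*n)) * σ (n+i) * σ (n+i-1)
        = σ (n+i) * σ (n+i-1) * σ (n+i) := by
      have := sigma_braid (m := 2*n) (k := n+i-1) (by omega) (by omega)
      rwa [show n + i - 1 + 1 = n + i from by omega] at this
    have hxyx : (σ (n-i+1) : BraidGroup (2*n)) * σ (n-i) * σ (n-i+1)
        = σ (n-i) * σ (n-i+1) * σ (n-i) :=
      (sigma_braid (m := 2*n) (k := n-i) (by omega) (by omega)).symm
    exact key2 _ _ _ _ hab hxyx
      ((cms (by omega) (by omega) (by omega) : Commute (σ (n-i+1)) (σ (n+i-1))).symm.eq)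
      ((cms (by omega) (by omega) (by omega) : Commute (σ (n-i)) (σ (n+i-1))).symm.eq)
      ((cms (by omega) (by omega) (by omega) : Commute (σ (n-i+1)) (σ (n+i))).symm.eq)
      ((cms (by omega) (by omega) (by omega) : Commute (σ (n-i)) (σ (n+i))).symm.eq)
  · intro i j h1i hin h1j hjn hij
    rcases eq_or_lt_of_le h1i with h1 | h2
    · subst h1
      rw [ht1, hti j (by omega) hjn]
      have c1 : Commute (σ n : BraidGroup (2*n)) (σ (n+j-1)) :=
        cms (by omega) (by omega) (by omega)
      have c2 : Commute (σ n : BraidGroup (2*n)) (σ (n-j+1)) :=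
        (cms (by omega) (by omega) (by omega)).symm
      exact (c1.mul_right c2).eq
    · rw [hti i (by omega) hin, hti j (by omega) hjn]
      have c1 : Commute (σ (n+i-1) : BraidGroup (2*n)) (σ (n+j-1)) :=
        cms (by omega) (by omega) (by omega)
      have c2 : Commute (σ (n+i-1) : BraidGroup (2*n)) (σ (n-j+1)) :=
        (cms (by omega) (by omega) (by omega)).symm
      have c3 : Commute (σ (n-i+1) : BraidGroup (2*n)) (σ (n+j-1)) :=
        cms (by omega) (by omega) (by omega)
      have c4 : Commute (σ (n-i+1) : BraidGroup (2*n)) (σ (n-j+1)) :=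
        (cms (by omega) (by omega) (by omega)).symm
      exact ((c1.mul_right c2).mul_left (c3.mul_right c4)).eq
end

section
/- Let G be a group and S ⊆ G a generating set containing Δ with x ∈ S ⟹ Δx⁻¹ ∈ S. Then for any x_1,…,x_k ∈ S and any choice of signs, the element x_1^{ε_1}⋯x_k^{ε_k}·Δ^m lies in the set of elements expressible as (product of k elements of S)·Δ^{m−n}, where n is the number of i with ε_i = −1. -/
private lemma conj_prod {G : Type*} [Group G] (Δ : G) (l : List G) :
    Δ⁻¹ * l.prod = (l.map fun y => Δ⁻¹ * y * Δ).prod * Δ⁻¹ := by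
  induction l with
  | nil => simp
  | cons a t ih =>
      rw [List.map_cons, List.prod_cons, List.prod_cons, mul_assoc (Δ⁻¹ * a * Δ), ← ih]
      group

/-- Key rewriting step: for letters `x_1,…,x_k ∈ S` and signs `ε_i`, the element
`x_1^{ε_1} ⋯ x_k^{ε_k} · Δ^m` equals `(product of k elements of S) · Δ^{m-n}`, where
`n` is the number of negative signs. -/
theorem stmt_15 {G : Type*} [Group G] (S : Set G) (Δ : G)
    (hgen : Subgroup.closure S = ⊤) (hΔ : Δ ∈ S)
    (hc1 : ∀ x ∈ S, Δ * x⁻¹ ∈ S) (hc2 : ∀ x ∈ S, x⁻¹ * Δ ∈ S)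
    (L : List (G × Bool)) (hL : ∀ p ∈ L, p.1 ∈ S) (m : ℤ) :
    ∃ z : List G, z.length = L.length ∧ (∀ w ∈ z, w ∈ S) ∧
      (L.map fun p => if p.2 then p.1 else p.1⁻¹).prod * Δ ^ m =
        z.prod * Δ ^ (m - ((L.filter fun p => !p.2).length : ℤ)) := by
  induction L with
  | nil => exact ⟨[], by simp⟩
  | cons p T ih =>
    obtain ⟨x, ε⟩ := p
    have hx : x ∈ S := hL _ List.mem_cons_self
    obtain ⟨z, hlen, hzS, heq⟩ := ih (fun q hq => hL q (List.mem_cons_of_mem _ hq))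
    cases ε with
    | true =>
      refine ⟨x :: z, by simp [hlen], ?_, ?_⟩
      · intro w hw
        rcases List.mem_cons.1 hw with h | h
        · exact h ▸ hx
        · exact hzS w h
      · simp only [List.map_cons, List.prod_cons, List.filter_cons, if_true, mul_assoc, heq]
        simp
    | false =>
      refine ⟨(x⁻¹ * Δ) :: (z.map fun y => Δ⁻¹ * y * Δ), by simp [hlen], ?_, ?_⟩
      · intro w hw
        rcases List.mem_cons.1 hw with h | h
        · exact h ▸ hc2 x hx
        · obtain ⟨y, hy, rfl⟩ := List.mem_map.1 h
          have h1 : y⁻¹ * Δ ∈ S := hc2 y (hzS y hy)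
          have h2 : (y⁻¹ * Δ)⁻¹ * Δ ∈ S := hc2 _ h1
          simpa [mul_assoc] using h2
      · have key : x⁻¹ * (z.prod * Δ ^ (m - ((T.filter fun p => !p.2).length : ℤ))) =
            ((x⁻¹ * Δ) :: (z.map fun y => Δ⁻¹ * y * Δ)).prod *
              Δ ^ (m - ((T.filter fun p => !p.2).length : ℤ) - 1) := by
          have : x⁻¹ * z.prod = (x⁻¹ * Δ) * ((z.map fun y => Δ⁻¹ * y * Δ).prod * Δ⁻¹) := by
            rw [← conj_prod]; group
          rw [List.prod_cons, ← mul_assoc, this]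
          rw [show (m - ((T.filter fun p => !p.2).length : ℤ) - 1) =
            (-1) + (m - ((T.filter fun p => !p.2).length : ℤ)) by ring, zpow_add, zpow_neg_one]
          group
        have hn : m - (((((x, false) :: T).filter fun p => !p.2).length : ℕ) : ℤ) =
            m - ((T.filter fun p => !p.2).length : ℤ) - 1 := by
          simp [List.filter_cons]; ring
        rw [List.map_cons, List.prod_cons, if_neg (by simp), mul_assoc, heq, key, hn]
end
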